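/- arXiv:0709.0897 — 3 statements merged into one kernel-verified Lean document; each statement's English description precedes it below -/
import Mathlib

section
/- Let λ = [λ_∞, λ^(r), e]_p be a partition with partition datum of period p, let c^(r) be the number of columns of the remainder λ^(r), and let λ^(f) be the front section. Then the weight of λ satisfies |λ| = |λ^(r)| + |λ^(f)| + (c^(r) + e − 1)·p. -/
/-- A partition: a weakly decreasing list of positive integers. -/
def IsPartition (l : List ℕ) : Prop :=
  l.Pairwise (· ≥ ·) ∧ ∀ x ∈ l, 0 < x

/-- Hook length of the box in row `i`, column `j` (0-indexed):
arm (number of boxes strictly to the right) + leg (boxes strictly below) + 1. -/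
def hook (l : List ℕ) (i j : ℕ) : ℕ :=
  (l.getD i 0 - j) + ((Finset.range l.length).filter (fun k => i < k ∧ j < l.getD k 0)).card

/-- The multiset of all hook lengths of a partition. -/
def hookMultiset (l : List ℕ) : Multiset ℕ :=
  ↑((List.range l.length).flatMap fun i => (List.range (l.getD i 0)).map fun j => hook l i j)

/-- The set of first-column hook lengths. -/
def firstColHooks (l : List ℕ) : Finset ℕ :=
  (Finset.range l.length).image fun i => hook l i 0

/-- The multiset `{s - t : s ∈ S, t ∈ T, s > t}`. -/
def posDiffs (S T : Finset ℕ) : Multiset ℕ :=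
  ((S ×ˢ T).filter fun q => q.2 < q.1).val.map fun q => q.1 - q.2

/-- The remnant of a partition: the complement in the `r × c` rectangle, rotated 180°. -/
def remnant (l : List ℕ) : List ℕ :=
  ((l.reverse).map fun x => l.headD 0 - x).filter fun x => decide (0 < x)

/-- The front section of the first `p` rows: delete all full-height columns but the rightmost. -/
def frontSection (l : List ℕ) (p : ℕ) : List ℕ :=
  (l.take p).map fun v => v + 1 - l.getD (p - 1) 0

/-- The extension `λ_p - λ_{p+1}` of a partition with respect to period `p`. -/
def extension (l : List ℕ) (p : ℕ) : ℕ :=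
  l.getD (p - 1) 0 - l.getD p 0

/-- The multiset of differences `{c_i - c_j : i < j}` of a (decreasing) list. -/
def listDiffs (ch : List ℕ) : Multiset ℕ :=
  ↑((List.range ch.length).flatMap fun i =>
    ((List.range ch.length).filter fun j => decide (i < j)).map fun j => ch.getD i 0 - ch.getD j 0)

/-- The characteristic of a front section: its first-column hook lengths. -/
def charList (fs : List ℕ) : List ℕ :=
  (List.range fs.length).map fun i => hook fs i 0

/-- The multiset of missing hook numbers of the ∞-partition formed from the top `p` rows. -/
def missingHooks (l : List ℕ) (p : ℕ) : Multiset ℕ :=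
  listDiffs (charList (frontSection l p))

/-- Reconstruct a partition from a `p`-partition datum: front section `fs` atop
remainder `rem`, with extension `x`. -/
def assemble (fs rem : List ℕ) (x : ℕ) : List ℕ :=
  (fs.map fun v => v + (rem.headD 0 + x) - 1) ++ rem

/-- Increment the first `p` parts of `l` by `n`. -/
def bump (l : List ℕ) (p n : ℕ) : List ℕ :=
  ((l.take p).map fun v => v + n) ++ l.drop p

/-- The difference multiset `{a i - a j : 1 ≤ i < j ≤ p}` of a (1-indexed) sequence. -/
def seqDiffs (a : ℕ → ℕ) (p : ℕ) : Multiset ℕ :=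
  ((Finset.Icc 1 p ×ˢ Finset.Icc 1 p).filter fun q => q.1 < q.2).val.map fun q => a q.1 - a q.2

/-- Multiplicity of `m` among the hook lengths of the ∞-partition with front section `f`:
the number of rows `i` containing a box (possibly at a negative column `j`) of hook length `m`. -/
noncomputable def infMult (f : List ℕ) (m : ℕ) : ℕ :=
  Set.ncard {i : ℕ | i < f.length ∧ ∃ j : ℤ, j < (f.getD i 0 : ℤ) ∧
    ((f.getD i 0 : ℤ) - j) +
      (((Finset.range f.length).filter fun k => i < k ∧ j < (f.getD k 0 : ℤ)).card : ℤ) = (m : ℤ)}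

/-- The characteristic set of the enveloping ∞-partition `E∞(λ)`:
`{a + t + 1 : a ∈ A} ∪ {a' + 1 : a' ∈ A'}`. -/
def envChar (l : List ℕ) : Finset ℕ :=
  ((firstColHooks l).image fun a => a + (l.length + l.headD 0) + 1) ∪
  (((Finset.range (l.length + l.headD 0)) \ firstColHooks l).image fun a => a + 1)

/-- The missing-hook-number multiset of `E∞(λ)`: all positive pairwise differences
of the characteristic set. -/
def envMissing (l : List ℕ) : Multiset ℕ := posDiffs (envChar l) (envChar l)

/-- Number of parts of `l` exceeding `j`: the `(j+1)`-st part of the conjugate. -/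
def conjPart (l : List ℕ) (j : ℕ) : ℕ :=
  ((Finset.range l.length).filter fun k => j < l.getD k 0).card

/-- The enveloping partition `E(λ)`: a `t × t` square with the rotated reflection of `λ`
removed from the bottom-right, and copies of `λ` adjoined top-right and bottom-left. -/
def envelope (l : List ℕ) : List ℕ :=
  (l.map fun v => v + (l.length + l.headD 0)) ++
  ((List.range (l.headD 0)).map fun i =>
    (l.length + l.headD 0) - conjPart l (l.headD 0 - 1 - i)) ++ l

/-- Iteratively stack `d` copies of the front section `fs` atop `rem`, with extensions `x i`. -/
def stack (fs rem : List ℕ) (x : ℕ → ℕ) : ℕ → List ℕ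
  | 0 => rem
  | (i + 1) => assemble fs (stack fs rem x i) (x (i + 1))

lemma mapsum_aux (a : ℕ) : ∀ t : List ℕ, (∀ v ∈ t, a ≤ v) →
    (t.map fun v => v + 1 - a).sum + t.length * a = t.sum + t.length := by
  intro t
  induction t with
  | nil => simp
  | cons x xs ih =>
    intro h
    have hx : a ≤ x := h x List.mem_cons_self
    have := ih (fun v hv => h v (List.mem_cons_of_mem _ hv))
    simp only [List.map_cons, List.sum_cons, List.length_cons]
    have hsm : (xs.length + 1) * a = xs.length * a + a := by ring
    omega

/-- Weight of a partition in terms of its `p`-partition datum: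
`|λ| = |λ^(r)| + |λ^(f)| + (c^(r) + e - 1)·p`. -/
theorem stmt15 (l : List ℕ) (p : ℕ) (hp : 0 < p)
    (hl : IsPartition l) (hpl : p < l.length) :
    l.sum = (l.drop p).sum + (frontSection l p).sum
      + ((l.drop p).headD 0 + extension l p - 1) * p := by
  obtain ⟨hs, hpos⟩ := hl
  have hlen : 0 < l.length := lt_trans hp hpl
  have hp1 : p - 1 < l.length := by omega
  have hmono : ∀ i j : ℕ, i ≤ j → j < l.length → l.getD j 0 ≤ l.getD i 0 := by
    intro i j hij hj
    rcases eq_or_lt_of_le hij with rfl | hlt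
    · exact le_refl _
    · have hi : i < l.length := lt_trans hlt hj
      rw [List.getD_eq_getElem l 0 hi, List.getD_eq_getElem l 0 hj]
      exact List.pairwise_iff_get.mp hs ⟨i, hi⟩ ⟨j, hj⟩ hlt
  set a := l.getD (p - 1) 0 with ha
  set b := l.getD p 0 with hbdef
  have hba : b ≤ a := hmono (p - 1) p (by omega) hpl
  have hbpos : 0 < b := by
    apply hpos
    rw [hbdef, List.getD_eq_getElem l 0 hpl]
    exact List.getElem_mem _
  have hdrop : l.drop p = l[p] :: l.drop (p + 1) := List.drop_eq_getElem_cons hpl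
  have hhead : (l.drop p).headD 0 = b := by
    rw [hdrop, hbdef, List.getD_eq_getElem l 0 hpl]; rfl
  have hext : extension l p = a - b := rfl
  have htake : ∀ v ∈ l.take p, a ≤ v := by
    intro v hv
    obtain ⟨i, hi, rfl⟩ := List.mem_iff_getElem.mp hv
    rw [List.getElem_take]
    have hilen : i < l.length := by
      rw [List.length_take] at hi; omega
    have hip : i ≤ p - 1 := by
      rw [List.length_take] at hi; omega
    rw [ha, ← List.getD_eq_getElem l 0 hilen]
    exact hmono i (p - 1) hip hp1
  have key := mapsum_aux a (l.take p) htake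
  have hfs : (frontSection l p).sum = ((l.take p).map fun v => v + 1 - a).sum := rfl
  have hlt : (l.take p).length = p := by
    rw [List.length_take]; omega
  have hsplit : (l.take p).sum + (l.drop p).sum = l.sum := List.sum_take_add_sum_drop l p
  rw [hhead, hext, hfs]
  have hc1 : b + (a - b) - 1 + 1 = a := by omega
  have hm : (b + (a - b) - 1 + 1) * p = (b + (a - b) - 1) * p + p := by ring
  rw [hc1] at hm
  rw [hlt, Nat.mul_comm p a] at key
  omega
end

section
/- Let λ be a partition with r rows and c columns, t = r + c, and λ̃ its remnant. Then for every integer i, the multiplicity of i among the hook lengths of λ minus the multiplicity of t−i among the hook lengths of λ equals the multiplicity of i among the hook lengths of λ̃ minus the multiplicity of t−i among the hook lengths of λ̃: H_i(λ) − H_{t−i}(λ) = H_i(λ̃) − H_{t−i}(λ̃). -/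
namespace Aux


lemma getD_mem {l : List ℕ} {k : ℕ} (h : k < l.length) : l.getD k 0 ∈ l := by
  rw [List.getD_eq_getElem _ _ h]; exact List.getElem_mem _

lemma sorted_getD {l : List ℕ} (hs : l.Pairwise (· ≥ ·)) {i j : ℕ} (hij : i ≤ j)
    (hj : j < l.length) : l.getD j 0 ≤ l.getD i 0 := by
  rcases eq_or_lt_of_le hij with rfl | hlt
  · exact le_rfl
  · have hi : i < l.length := lt_trans hlt hj
    rw [List.getD_eq_getElem _ _ hj, List.getD_eq_getElem _ _ hi]
    exact hs.rel_get_of_lt (a := ⟨i, hi⟩) (b := ⟨j, hj⟩) hlt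

lemma legs_card {l : List ℕ} (hp : ∀ x ∈ l, 0 < x) {i : ℕ} :
    ((Finset.range l.length).filter fun k => i < k ∧ 0 < l.getD k 0).card
      = l.length - 1 - i := by
  have h1 : ((Finset.range l.length).filter fun k => i < k ∧ 0 < l.getD k 0)
      = Finset.Ico (i+1) l.length := by
    ext k
    simp only [Finset.mem_filter, Finset.mem_range, Finset.mem_Ico]
    constructor
    · rintro ⟨hk, hik, -⟩; omega
    · rintro ⟨h1, h2⟩
      exact ⟨h2, by omega, hp _ (getD_mem h2)⟩
  rw [h1, Nat.card_Ico]; omega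

lemma hook_col0 {l : List ℕ} (hp : ∀ x ∈ l, 0 < x) {i : ℕ} :
    hook l i 0 = l.getD i 0 + (l.length - 1 - i) := by
  rw [hook, Nat.sub_zero, legs_card hp]

lemma hook_col0_lt {l : List ℕ} (hs : l.Pairwise (· ≥ ·)) (hp : ∀ x ∈ l, 0 < x)
    {i : ℕ} (hi : i < l.length) : hook l i 0 < l.length + l.headD 0 := by
  have h0 : 0 < l.length := by omega
  have : l.headD 0 = l.getD 0 0 := by
    cases l with
    | nil => simp at h0
    | cons a t => rfl
  have h2 := sorted_getD hs (Nat.zero_le i) hi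
  rw [hook_col0 hp, this]
  omega

lemma card_firstColHooks {l : List ℕ} (hs : l.Pairwise (· ≥ ·)) (hp : ∀ x ∈ l, 0 < x) :
    (firstColHooks l).card = l.length := by
  rw [firstColHooks, Finset.card_image_of_injOn, Finset.card_range]
  intro i hi j hj hij
  simp only [Finset.coe_range, Set.mem_Iio] at hi hj
  simp only at hij
  by_contra hne
  rcases Nat.lt_or_ge i j with h | h
  · have := sorted_getD hs (le_of_lt h) hj
    rw [hook_col0 hp, hook_col0 hp] at hij
    omega
  · have hlt : j < i := by omega
    have := sorted_getD hs (le_of_lt hlt) hi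
    rw [hook_col0 hp, hook_col0 hp] at hij
    omega




lemma shiftcard (P : ℕ → Prop) [DecidablePred P] (n : ℕ) :
    ((Finset.range (n+1)).filter fun k => 0 < k ∧ P k).card
      = ((Finset.range n).filter fun k => P (k+1)).card := by
  refine Finset.card_bij' (fun a _ => a - 1) (fun b _ => b + 1) ?hi ?hj ?li ?ri
  case hi =>
    intro a ha
    simp only [Finset.mem_filter, Finset.mem_range] at ha ⊢
    obtain ⟨h1, h2, h3⟩ := ha
    refine ⟨by omega, ?_⟩
    have : a - 1 + 1 = a := by omega
    rw [this]; exact h3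
  case hj =>
    intro b hb
    simp only [Finset.mem_filter, Finset.mem_range] at hb ⊢
    exact ⟨by omega, by omega, hb.2⟩
  case li =>
    intro a ha
    simp only [Finset.mem_filter, Finset.mem_range] at ha
    show a - 1 + 1 = a
    omega
  case ri =>
    intro b _
    show b + 1 - 1 = b
    omega

lemma hook_cons_succ (a : ℕ) (tl : List ℕ) (i j : ℕ) :
    hook (a :: tl) (i+1) j = hook tl i j := by
  unfold hook
  rw [List.getD_cons_succ]
  congr 1
  have h1 : ((Finset.range (a :: tl).length).filter fun k => i+1 < k ∧ j < (a::tl).getD k 0)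
      = ((Finset.range (tl.length + 1)).filter fun k => 0 < k ∧ (i+1 < k ∧ j < (a::tl).getD k 0)) := by
    apply Finset.filter_congr
    intro x _
    constructor
    · rintro ⟨h1, h2⟩; exact ⟨by omega, h1, h2⟩
    · rintro ⟨_, h1, h2⟩; exact ⟨h1, h2⟩
  rw [h1, shiftcard]
  congr 1
  apply Finset.filter_congr
  intro k _
  rw [List.getD_cons_succ]
  omega




lemma firstColHooks_cons (a : ℕ) (tl : List ℕ) :
    firstColHooks (a :: tl) = insert (hook (a :: tl) 0 0) (firstColHooks tl) := by
  ext x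
  simp only [firstColHooks, Finset.mem_image, Finset.mem_range, Finset.mem_insert,
    List.length_cons]
  constructor
  · rintro ⟨i, hi, rfl⟩
    cases i with
    | zero => exact Or.inl rfl
    | succ k => exact Or.inr ⟨k, by omega, (hook_cons_succ a tl k 0).symm⟩
  · rintro (rfl | ⟨k, hk, rfl⟩)
    · exact ⟨0, by omega, rfl⟩
    · exact ⟨k + 1, by omega, hook_cons_succ a tl k 0⟩

lemma hookMultiset_cons (a : ℕ) (tl : List ℕ) :
    hookMultiset (a :: tl)
      = ↑((List.range a).map fun j => hook (a :: tl) 0 j) + hookMultiset tl := by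
  unfold hookMultiset
  simp only [List.length_cons, List.range_succ_eq_map, List.flatMap_cons,
    List.flatMap_map]
  have h1 : ((List.range tl.length).flatMap
        fun i => (List.range ((a::tl).getD (Nat.succ i) 0)).map fun j => hook (a::tl) (Nat.succ i) j)
      = (List.range tl.length).flatMap
        (fun i => (List.range (tl.getD i 0)).map fun j => hook tl i j) := by
    congr 1
    funext i
    rw [List.getD_cons_succ]
    congr 1
    funext j
    exact hook_cons_succ a tl i j
  rw [h1]
  simp [List.getD_cons_zero]




section Row0

variable {a : ℕ} {tl : List ℕ}

/-- `E j`: number of rows of `tl` with part `≤ j`. -/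
def E (tl : List ℕ) (j : ℕ) : ℕ :=
  ((Finset.range tl.length).filter fun k => tl.getD k 0 ≤ j).card

lemma E_le (tl : List ℕ) (j : ℕ) : E tl j ≤ tl.length := by
  classical
  exact le_trans (Finset.card_filter_le _ _) (le_of_eq (Finset.card_range _))

lemma E_mono (tl : List ℕ) {j j' : ℕ} (h : j ≤ j') : E tl j ≤ E tl j' := by
  apply Finset.card_le_card
  intro k hk
  simp only [Finset.mem_filter, Finset.mem_range] at hk ⊢
  omega

lemma hook_row0 (j : ℕ) :
    hook (a :: tl) 0 j = (a - j) + (tl.length - E tl j) := by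
  unfold hook
  rw [List.getD_cons_zero]
  congr 1
  rw [List.length_cons]
  have h1 : ((Finset.range (tl.length+1)).filter fun k => 0 < k ∧ j < (a::tl).getD k 0).card
      = ((Finset.range tl.length).filter fun k => j < tl.getD k 0).card := by
    rw [shiftcard]
    congr 1
  rw [h1]
  have h2 := Finset.card_filter_add_card_filter_not
    (s := Finset.range tl.length) (p := fun k => tl.getD k 0 ≤ j)
  have h3 : ((Finset.range tl.length).filter fun k => ¬ tl.getD k 0 ≤ j)
      = ((Finset.range tl.length).filter fun k => j < tl.getD k 0) := by
    apply Finset.filter_congr; intro k _; omega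
  rw [h3] at h2
  have h4 := Finset.card_range tl.length
  unfold E
  omega

lemma dd_not_mem (hst : tl.Pairwise (· ≥ ·)) (hpt : ∀ x ∈ tl, 0 < x) (j : ℕ) :
    j + E tl j ∉ firstColHooks tl := by
  intro hmem
  rw [firstColHooks] at hmem
  simp only [Finset.mem_image, Finset.mem_range] at hmem
  obtain ⟨k, hk, hb⟩ := hmem
  rw [hook_col0 hpt] at hb
  rcases le_or_gt (tl.getD k 0) j with hc | hc
  · -- E tl j ≥ tl.length - k
    have hsub : Finset.Ico k tl.length ⊆ (Finset.range tl.length).filter fun m => tl.getD m 0 ≤ j := by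
      intro m hm
      simp only [Finset.mem_Ico] at hm
      simp only [Finset.mem_filter, Finset.mem_range]
      exact ⟨hm.2, le_trans (sorted_getD hst hm.1 hm.2) hc⟩
    have := Finset.card_le_card hsub
    rw [Nat.card_Ico] at this
    have hE : tl.length - k ≤ E tl j := this
    omega
  · -- E tl j ≤ tl.length - 1 - k
    have hsub : ((Finset.range tl.length).filter fun m => tl.getD m 0 ≤ j) ⊆ Finset.Ico (k+1) tl.length := by
      intro m hm
      simp only [Finset.mem_filter, Finset.mem_range] at hm
      simp only [Finset.mem_Ico]
      refine ⟨?_, hm.1⟩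
      by_contra hmk
      have : tl.getD k 0 ≤ tl.getD m 0 := sorted_getD hst (by omega) hk
      omega
    have := Finset.card_le_card hsub
    rw [Nat.card_Ico] at this
    have hE : E tl j ≤ tl.length - (k+1) := this
    have hE2 := E_le tl j
    omega

lemma dd_strictMono : StrictMono (fun j => j + E tl j) := by
  intro j j' h
  have := E_mono tl (le_of_lt h)
  simp only
  omega

lemma dd_image (hs : (a :: tl).Pairwise (· ≥ ·)) (hp : ∀ x ∈ (a :: tl), 0 < x) :
    (Finset.range a).image (fun j => j + E tl j)
      = Finset.range (a + tl.length) \ firstColHooks tl := by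
  have hst : tl.Pairwise (· ≥ ·) := (List.pairwise_cons.mp hs).2
  have hat : ∀ x ∈ tl, x ≤ a := (List.pairwise_cons.mp hs).1
  have hpt : ∀ x ∈ tl, 0 < x := fun x hx => hp x (List.mem_cons_of_mem a hx)
  have ha : 0 < a := hp a (List.mem_cons_self)
  have hsubset : (Finset.range a).image (fun j => j + E tl j)
      ⊆ Finset.range (a + tl.length) \ firstColHooks tl := by
    intro x hx
    simp only [Finset.mem_image, Finset.mem_range] at hx
    obtain ⟨j, hj, rfl⟩ := hx
    rw [Finset.mem_sdiff, Finset.mem_range]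
    have := E_le tl j
    exact ⟨by omega, dd_not_mem hst hpt j⟩
  apply Finset.eq_of_subset_of_card_le hsubset
  have hc1 : ((Finset.range a).image (fun j => j + E tl j)).card = a := by
    rw [Finset.card_image_of_injOn (Set.InjOn.mono (Set.subset_univ _) (dd_strictMono.injective.injOn)),
      Finset.card_range]
  have hfc : firstColHooks tl ⊆ Finset.range (a + tl.length) := by
    intro b hb
    rw [firstColHooks] at hb
    simp only [Finset.mem_image, Finset.mem_range] at hb
    obtain ⟨k, hk, rfl⟩ := hb
    rw [Finset.mem_range]
    have h1 := hook_col0_lt hst hpt hk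
    have h2 : tl.headD 0 ≤ a := by
      cases tl with
      | nil => simp
      | cons b tb => exact hat b (List.mem_cons_self)
    omega
  rw [Finset.card_sdiff_of_subset hfc, Finset.card_range, card_firstColHooks hst hpt, hc1]
  omega

/-- The row-0 count lemma. -/
lemma row0_count (hs : (a :: tl).Pairwise (· ≥ ·)) (hp : ∀ x ∈ (a :: tl), 0 < x)
    {T : ℕ} (hT : a + tl.length < T) (n : ℕ) :
    ((Finset.range a).filter fun j => hook (a :: tl) 0 j = n).card
      = ((Finset.range T \ insert (a + tl.length) (firstColHooks tl)).filter
          fun x => x < a + tl.length ∧ (a + tl.length) - x = n).card := by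
  have hst : tl.Pairwise (· ≥ ·) := (List.pairwise_cons.mp hs).2
  have hpt : ∀ x ∈ tl, 0 < x := fun x hx => hp x (List.mem_cons_of_mem a hx)
  have himg := dd_image hs hp
  refine Finset.card_bij (fun j _ => j + E tl j) ?hi ?inj ?surj
  case hi =>
    intro j hj
    simp only [Finset.mem_filter, Finset.mem_range] at hj
    obtain ⟨hja, hjn⟩ := hj
    have hdd : j + E tl j ∈ Finset.range (a + tl.length) \ firstColHooks tl := by
      rw [← himg]
      exact Finset.mem_image_of_mem _ (Finset.mem_range.mpr hja)
    rw [Finset.mem_sdiff, Finset.mem_range] at hdd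
    rw [hook_row0] at hjn
    have hE := E_le tl j
    simp only [Finset.mem_filter, Finset.mem_sdiff, Finset.mem_range, Finset.mem_insert]
    refine ⟨⟨by omega, ?_⟩, by omega, by omega⟩
    push_neg
    exact ⟨by omega, hdd.2⟩
  case inj =>
    intro j hj j' hj' heq
    exact dd_strictMono.injective heq
  case surj =>
    intro x hx
    simp only [Finset.mem_filter, Finset.mem_sdiff, Finset.mem_range, Finset.mem_insert] at hx
    obtain ⟨⟨hxT, hxi⟩, hxh, hxn⟩ := hx
    push_neg at hxi
    have hxmem : x ∈ (Finset.range a).image (fun j => j + E tl j) := by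
      rw [himg, Finset.mem_sdiff, Finset.mem_range]
      exact ⟨hxh, hxi.2⟩
    simp only [Finset.mem_image, Finset.mem_range] at hxmem
    obtain ⟨j, hja, hjx⟩ := hxmem
    refine ⟨j, Finset.mem_filter.mpr ⟨Finset.mem_range.mpr hja, ?_⟩, hjx⟩
    rw [hook_row0]
    have hE := E_le tl j
    omega

end Row0



/-- count of pairs (s,t) with s∈S, t∈T, t<s, s−t = n -/
def cnt (S T : Finset ℕ) (n : ℕ) : ℕ :=
  ((S ×ˢ T).filter fun q => q.2 < q.1 ∧ q.1 - q.2 = n).card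

lemma cnt_empty (T : Finset ℕ) (n : ℕ) : cnt ∅ T n = 0 := by
  simp [cnt]

lemma cnt_congr (S C C' : Finset ℕ) (n : ℕ)
    (h : ∀ x, (∃ s ∈ S, x < s) → (x ∈ C ↔ x ∈ C')) :
    cnt S C n = cnt S C' n := by
  unfold cnt
  congr 1
  ext q
  simp only [Finset.mem_filter, Finset.mem_product]
  constructor
  · rintro ⟨⟨h1, h2⟩, h3, h4⟩
    exact ⟨⟨h1, (h q.2 ⟨q.1, h1, h3⟩).mp h2⟩, h3, h4⟩
  · rintro ⟨⟨h1, h2⟩, h3, h4⟩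
    exact ⟨⟨h1, (h q.2 ⟨q.1, h1, h3⟩).mpr h2⟩, h3, h4⟩

lemma cnt_insert {S : Finset ℕ} (C : Finset ℕ) {h0 : ℕ} (hh : h0 ∉ S) (n : ℕ) :
    cnt (insert h0 S) C n
      = (C.filter fun x => x < h0 ∧ h0 - x = n).card + cnt S C n := by
  unfold cnt
  have hsplit : ((insert h0 S ×ˢ C).filter fun q => q.2 < q.1 ∧ q.1 - q.2 = n)
      = (({h0} ×ˢ C).filter fun q => q.2 < q.1 ∧ q.1 - q.2 = n)
        ∪ ((S ×ˢ C).filter fun q => q.2 < q.1 ∧ q.1 - q.2 = n) := by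
    ext q
    simp only [Finset.mem_filter, Finset.mem_union, Finset.mem_product, Finset.mem_insert,
      Finset.mem_singleton]
    tauto
  rw [hsplit, Finset.card_union_of_disjoint]
  · congr 1
    refine Finset.card_bij (fun q _ => q.2) ?hi ?inj ?surj
    · intro q hq
      simp only [Finset.mem_filter, Finset.mem_product, Finset.mem_singleton] at hq ⊢
      obtain ⟨⟨rfl, h2⟩, h3, h4⟩ := hq
      exact ⟨h2, h3, h4⟩
    · intro q hq q' hq'
      simp only [Finset.mem_filter, Finset.mem_product, Finset.mem_singleton] at hq hq'
      intro he
      exact Prod.ext (hq.1.1.trans hq'.1.1.symm) he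
    · intro x hx
      simp only [Finset.mem_filter] at hx
      refine ⟨(h0, x), ?_, rfl⟩
      simp only [Finset.mem_filter, Finset.mem_product, Finset.mem_singleton]
      exact ⟨⟨by simp, hx.1⟩, hx.2.1, hx.2.2⟩
  · rw [Finset.disjoint_left]
    intro q hq hq'
    simp only [Finset.mem_filter, Finset.mem_product, Finset.mem_singleton] at hq hq'
    exact hh (hq.1.1 ▸ hq'.1.1)

lemma cnt_zero_of_big {S C : Finset ℕ} {t : ℕ} (hS : ∀ s ∈ S, s < t) {n : ℕ} (hn : t ≤ n) :
    cnt S C n = 0 := by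
  unfold cnt
  rw [Finset.card_eq_zero]
  rw [Finset.filter_eq_empty_iff]
  rintro q hq
  rw [Finset.mem_product] at hq
  have := hS q.1 hq.1
  omega

lemma cnt_zero_n0 (S C : Finset ℕ) : cnt S C 0 = 0 := by
  unfold cnt
  rw [Finset.card_eq_zero, Finset.filter_eq_empty_iff]
  rintro q _
  omega





lemma fch_lt {l : List ℕ} (hs : l.Pairwise (· ≥ ·)) (hp : ∀ x ∈ l, 0 < x) :
    ∀ b ∈ firstColHooks l, b < l.length + l.headD 0 := by
  intro b hb
  rw [firstColHooks] at hb
  simp only [Finset.mem_image, Finset.mem_range] at hb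
  obtain ⟨i, hi, rfl⟩ := hb
  exact hook_col0_lt hs hp hi

theorem main_count (l : List ℕ) (hs : l.Pairwise (· ≥ ·)) (hp : ∀ x ∈ l, 0 < x) :
    ∀ T, l.length + l.headD 0 ≤ T → ∀ n,
      Multiset.count n (hookMultiset l)
        = cnt (firstColHooks l) (Finset.range T \ firstColHooks l) n := by
  induction l with
  | nil =>
    intro T _ n
    simp [hookMultiset, firstColHooks, cnt]
  | cons a tl ih =>
    intro T hT n
    have hst : tl.Pairwise (· ≥ ·) := (List.pairwise_cons.mp hs).2
    have hat : ∀ x ∈ tl, x ≤ a := (List.pairwise_cons.mp hs).1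
    have hpt : ∀ x ∈ tl, 0 < x := fun x hx => hp x (List.mem_cons_of_mem a hx)
    have hta : tl.headD 0 ≤ a := by
      cases tl with
      | nil => simp
      | cons b tb => exact hat b (List.mem_cons_self)
    have hlen : (a :: tl).length = tl.length + 1 := rfl
    have hhead : (a :: tl).headD 0 = a := rfl
    set h0 : ℕ := a + tl.length with hh0
    have hhook00 : hook (a :: tl) 0 0 = h0 := by
      rw [hook_col0 hp]
      simp only [List.getD_cons_zero, hlen]
      omega
    have hTbig : h0 < T := by rw [hlen, hhead] at hT; omega
    have hfcb : ∀ b ∈ firstColHooks tl, b < tl.length + tl.headD 0 := fch_lt hst hpt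
    have hfcb' : ∀ b ∈ firstColHooks tl, b < h0 := fun b hb => by
      have := hfcb b hb; omega
    have hh0nm : h0 ∉ firstColHooks tl := fun hmem => by
      have := hfcb' h0 hmem; omega
    -- split the multiset
    rw [hookMultiset_cons, Multiset.count_add]
    -- row 0 count
    have hrow : Multiset.count n ↑((List.range a).map fun j => hook (a :: tl) 0 j)
        = ((Finset.range a).filter fun j => hook (a :: tl) 0 j = n).card := by
      rw [← Multiset.map_coe, Multiset.count_map]
      have : (↑(List.range a) : Multiset ℕ) = (Finset.range a).val := rfl
      rw [this, ← Finset.filter_val]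
      show ((Finset.range a).filter fun j => n = hook (a :: tl) 0 j).card = _
      congr 1
      apply Finset.filter_congr
      intro j _
      exact eq_comm
    rw [hrow, row0_count hs hp hTbig n]
    -- tail count via IH
    rw [ih hst hpt (tl.length + tl.headD 0) le_rfl n]
    -- window adjustments for the tail cnt
    have hw1 : cnt (firstColHooks tl)
          (Finset.range (tl.length + tl.headD 0) \ firstColHooks tl)
          n
        = cnt (firstColHooks tl) (Finset.range T \ insert h0 (firstColHooks tl)) n := by
      apply cnt_congr
      rintro x ⟨s, hsmem, hxs⟩
      have hs1 := hfcb s hsmem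
      have hs2 := hfcb' s hsmem
      simp only [Finset.mem_sdiff, Finset.mem_range, Finset.mem_insert]
      constructor
      · rintro ⟨h1, h2⟩
        exact ⟨by omega, by push_neg; exact ⟨by omega, h2⟩⟩
      · rintro ⟨h1, h2⟩
        push_neg at h2
        exact ⟨by omega, h2.2⟩
    rw [hw1]
    rw [firstColHooks_cons, hhook00, cnt_insert _ hh0nm n]



lemma rev_map_sorted {l : List ℕ} (hs : l.Pairwise (· ≥ ·)) (c : ℕ) :
    (l.reverse.map fun x => c - x).Pairwise (· ≥ ·) := by
  apply List.Pairwise.map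
  · intro x y (hxy : x ≤ y)
    exact Nat.sub_le_sub_left hxy c
  · rw [List.pairwise_reverse]
    exact hs

lemma filter_pos_prefix : ∀ (L : List ℕ), L.Pairwise (· ≥ ·) →
    (L.filter fun x => decide (0 < x)) <+: L := by
  intro L
  induction L with
  | nil => intro _; simp
  | cons x xs ih =>
    intro hs
    rcases Nat.eq_zero_or_pos x with hx | hx
    · have hall : ∀ y ∈ x :: xs, ¬ (0 < y) := by
        intro y hy
        rcases List.mem_cons.mp hy with rfl | hy'
        · omega
        · have := (List.pairwise_cons.mp hs).1 y hy'
          omega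
      have : (x :: xs).filter (fun x => decide (0 < x)) = [] := by
        rw [List.filter_eq_nil_iff]
        intro y hy
        simpa using hall y hy
      rw [this]
      exact List.nil_prefix
    · rw [List.filter_cons_of_pos (by simpa using hx)]
      obtain ⟨t, ht⟩ := ih (List.pairwise_cons.mp hs).2
      exact ⟨t, by rw [List.cons_append, ht]⟩

lemma prefix_getD {p L : List ℕ} (h : p <+: L) {k : ℕ} (hk : k < p.length) :
    p.getD k 0 = L.getD k 0 := by
  have hk2 : k < L.length := lt_of_lt_of_le hk h.length_le
  rw [List.getD_eq_getElem _ _ hk, List.getD_eq_getElem _ _ hk2]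
  exact h.getElem hk

lemma L_getD {l : List ℕ} {j : ℕ} (hj : j < l.length) :
    (l.reverse.map fun x => l.headD 0 - x).getD j 0
      = l.headD 0 - l.getD (l.length - 1 - j) 0 := by
  have hj' : j < (l.reverse.map fun x => l.headD 0 - x).length := by
    simpa using hj
  rw [List.getD_eq_getElem _ _ hj']
  rw [List.getElem_map]
  rw [List.getElem_reverse]
  rw [List.getD_eq_getElem _ _ (by simp at hj' ⊢; omega)]

lemma remnant_sorted {l : List ℕ} (hs : l.Pairwise (· ≥ ·)) : (remnant l).Pairwise (· ≥ ·) :=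
  (rev_map_sorted hs _).filter _

lemma remnant_pos {l : List ℕ} : ∀ x ∈ remnant l, 0 < x := by
  intro x hx
  rw [remnant, List.mem_filter] at hx
  simpa using hx.2

lemma remnant_prefix {l : List ℕ} (hs : l.Pairwise (· ≥ ·)) :
    remnant l <+: (l.reverse.map fun x => l.headD 0 - x) :=
  filter_pos_prefix _ (rev_map_sorted hs _)

lemma remnant_len_le {l : List ℕ} (hs : l.Pairwise (· ≥ ·)) :
    (remnant l).length ≤ l.length := by
  have := (remnant_prefix hs).length_le
  simpa using this

lemma remnant_getD {l : List ℕ} (hs : l.Pairwise (· ≥ ·)) {k : ℕ}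
    (hk : k < (remnant l).length) :
    (remnant l).getD k 0 = l.headD 0 - l.getD (l.length - 1 - k) 0 := by
  rw [prefix_getD (remnant_prefix hs) hk]
  exact L_getD (lt_of_lt_of_le hk (remnant_len_le hs))

lemma remnant_getD_lt {l : List ℕ} (hs : l.Pairwise (· ≥ ·)) {k : ℕ}
    (hk : k < (remnant l).length) :
    l.getD (l.length - 1 - k) 0 < l.headD 0 := by
  have h1 := remnant_pos (l := l) _ (getD_mem hk)
  rw [remnant_getD hs hk] at h1
  omega

/-- rows before the cut are full: `i < r - m → l_i = c`. -/
lemma full_rows {l : List ℕ} (hs : l.Pairwise (· ≥ ·)) {i : ℕ}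
    (hi1 : i < l.length) (hi2 : i < l.length - (remnant l).length) :
    l.getD i 0 = l.headD 0 := by
  set L := l.reverse.map fun x => l.headD 0 - x with hL
  set j : ℕ := l.length - 1 - i with hj
  have hjr : j < l.length := by omega
  have hjm : (remnant l).length ≤ j := by omega
  have hLs : L.Pairwise (· ≥ ·) := rev_map_sorted hs _
  -- headD ≥ getD i
  have hhead : l.getD i 0 ≤ l.headD 0 := by
    have h0 : (0:ℕ) < l.length := by omega
    have := sorted_getD hs (Nat.zero_le i) hi1
    have heq : l.headD 0 = l.getD 0 0 := by
      cases l with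
      | nil => simp at h0
      | cons a t => rfl
    omega
  by_contra hne
  have hLj : 0 < L.getD j 0 := by
    rw [hL, L_getD hjr]
    have : l.length - 1 - j = i := by omega
    rw [this]
    omega
  -- then the first j+1 entries of L are all positive, so countP ≥ j+1 > m
  have hlenL : L.length = l.length := by simp [hL]
  have htake : ∀ y ∈ L.take (j+1), 0 < y := by
    intro y hy
    obtain ⟨k, hk, rfl⟩ := List.getElem_of_mem hy
    have hkj : k ≤ j := by
      simp only [List.length_take] at hk
      omega
    have hkL : k < L.length := by
      simp only [List.length_take] at hk
      omega
    have hmono := sorted_getD hLs hkj (by omega : j < L.length)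
    rw [List.getD_eq_getElem _ _ hkL, List.getD_eq_getElem _ _ (by omega : j < L.length)] at hmono
    rw [List.getD_eq_getElem _ _ (by omega : j < L.length)] at hLj
    rw [List.getElem_take]
    omega
  have hcount : (L.take (j+1)).countP (fun x => decide (0 < x)) = j + 1 := by
    rw [List.countP_eq_length.mpr (by intro a ha; simpa using htake a ha)]
    rw [List.length_take]
    omega
  have hle := (List.take_sublist (j+1) L).countP_le (p := fun x => decide (0 < x))
  have hrem : (remnant l).length = L.countP (fun x => decide (0 < x)) := by
    rw [remnant, ← hL]
    exact (List.countP_eq_length_filter (l := L)).symm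
  omega





section M

variable {l : List ℕ} (hs : l.Pairwise (· ≥ ·)) (hp : ∀ x ∈ l, 0 < x)

lemma getD_le_head {l : List ℕ} (hs : l.Pairwise (· ≥ ·)) {i : ℕ} (hi : i < l.length) :
    l.getD i 0 ≤ l.headD 0 := by
  have := sorted_getD hs (Nat.zero_le i) hi
  have heq : l.headD 0 = l.getD 0 0 := by
    cases l with
    | nil => simp at hi
    | cons a t => rfl
  omega

lemma remnant_head_le {l : List ℕ} (hs : l.Pairwise (· ≥ ·)) :
    (remnant l).headD 0 ≤ l.headD 0 := by
  cases hrem : remnant l with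
  | nil => simp
  | cons b tb =>
    have hlen : 0 < (remnant l).length := by rw [hrem]; simp
    have := remnant_getD hs hlen
    rw [hrem] at this
    simp only [List.getD_cons_zero] at this
    simp only [List.headD_cons]
    omega

lemma M2 (hs : l.Pairwise (· ≥ ·)) (hp : ∀ x ∈ l, 0 < x) {x : ℕ}
    (hx : x ∈ firstColHooks (remnant l)) :
    x ≤ l.headD 0 + (remnant l).length - 1 ∧
      (l.headD 0 + (remnant l).length - 1) - x ∈ firstColHooks l := by
  simp only [firstColHooks, Finset.mem_image, Finset.mem_range] at hx
  obtain ⟨k, hk, rfl⟩ := hx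
  have hm : (remnant l).length ≤ l.length := remnant_len_le hs
  have hgetd := remnant_getD hs hk
  have hlt := remnant_getD_lt hs hk
  have hpos : 0 < l.getD (l.length - 1 - k) 0 := hp _ (getD_mem (by omega))
  have hhook : hook (remnant l) k 0 = (remnant l).getD k 0 + ((remnant l).length - 1 - k) :=
    hook_col0 remnant_pos
  have hhl : hook l (l.length - 1 - k) 0
      = l.getD (l.length - 1 - k) 0 + (l.length - 1 - (l.length - 1 - k)) :=
    hook_col0 hp
  constructor
  · omega
  · have hmem : hook l (l.length - 1 - k) 0 ∈ firstColHooks l := by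
      simp only [firstColHooks, Finset.mem_image, Finset.mem_range]
      exact ⟨l.length - 1 - k, by omega, rfl⟩
    have : (l.headD 0 + (remnant l).length - 1) - hook (remnant l) k 0
        = hook l (l.length - 1 - k) 0 := by omega
    rw [this]
    exact hmem

lemma M3 (hs : l.Pairwise (· ≥ ·)) (hp : ∀ x ∈ l, 0 < x) {a : ℕ}
    (ha : a ∈ firstColHooks l) (hb : a ≤ l.headD 0 + (remnant l).length - 1) :
    (l.headD 0 + (remnant l).length - 1) - a ∈ firstColHooks (remnant l) := by
  simp only [firstColHooks, Finset.mem_image, Finset.mem_range] at ha ⊢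
  obtain ⟨i, hi, rfl⟩ := ha
  have hm : (remnant l).length ≤ l.length := remnant_len_le hs
  have hhl : hook l i 0 = l.getD i 0 + (l.length - 1 - i) := hook_col0 hp
  have hpos : 0 < l.getD i 0 := hp _ (getD_mem hi)
  have hhd : l.getD i 0 ≤ l.headD 0 := getD_le_head hs hi
  have hge : l.length - (remnant l).length ≤ i := by
    by_contra hcon
    push_neg at hcon
    have hfull := full_rows hs hi hcon
    omega
  have hk : l.length - 1 - i < (remnant l).length := by omega
  have hgetd := remnant_getD hs hk
  have hlt := remnant_getD_lt hs hk
  have hik : l.length - 1 - (l.length - 1 - i) = i := by omega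
  rw [hik] at hgetd hlt
  have hhook : hook (remnant l) (l.length - 1 - i) 0
      = (remnant l).getD (l.length - 1 - i) 0 + ((remnant l).length - 1 - (l.length - 1 - i)) :=
    hook_col0 remnant_pos
  exact ⟨l.length - 1 - i, hk, by omega⟩

lemma M4 (hs : l.Pairwise (· ≥ ·)) (hp : ∀ x ∈ l, 0 < x) {a : ℕ}
    (h1 : a < l.length + l.headD 0) (h2 : a ∉ firstColHooks l) :
    a < l.headD 0 + (remnant l).length := by
  by_contra hcon
  push_neg at hcon
  apply h2
  have hm : (remnant l).length ≤ l.length := remnant_len_le hs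
  have hiz : (l.length + l.headD 0 - 1) - a < l.length - (remnant l).length := by omega
  have hir : (l.length + l.headD 0 - 1) - a < l.length := by omega
  have hfull := full_rows hs hir hiz
  have hhl : hook l ((l.length + l.headD 0 - 1) - a) 0
      = l.getD ((l.length + l.headD 0 - 1) - a) 0
        + (l.length - 1 - ((l.length + l.headD 0 - 1) - a)) := hook_col0 hp
  simp only [firstColHooks, Finset.mem_image, Finset.mem_range]
  exact ⟨(l.length + l.headD 0 - 1) - a, hir, by omega⟩

lemma B_lt (hs : l.Pairwise (· ≥ ·)) (hp : ∀ x ∈ l, 0 < x) :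
    ∀ x ∈ firstColHooks (remnant l), x < l.headD 0 + (remnant l).length := by
  intro x hx
  simp only [firstColHooks, Finset.mem_image, Finset.mem_range] at hx
  obtain ⟨k, hk, rfl⟩ := hx
  have h1 := hook_col0_lt (remnant_sorted hs) remnant_pos hk
  have h2 := remnant_head_le hs
  omega

end M




lemma remnant_cnt {l : List ℕ} (hs : l.Pairwise (· ≥ ·)) (hp : ∀ x ∈ l, 0 < x) (n : ℕ) :
    cnt (firstColHooks (remnant l))
      (Finset.range (l.headD 0 + (remnant l).length) \ firstColHooks (remnant l)) n
    = cnt (Finset.range (l.length + l.headD 0) \ firstColHooks l) (firstColHooks l) n := by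
  have hm : (remnant l).length ≤ l.length := remnant_len_le hs
  set W : ℕ := l.headD 0 + (remnant l).length with hW
  set t : ℕ := l.length + l.headD 0 with ht
  have hWt : W ≤ t := by omega
  unfold cnt
  refine Finset.card_bij' (fun q _ => (W - 1 - q.2, W - 1 - q.1))
    (fun p _ => (W - 1 - p.2, W - 1 - p.1)) ?hi ?hj ?li ?ri
  case hi =>
    rintro ⟨q1, q2⟩ hq
    simp only [Finset.mem_filter, Finset.mem_product, Finset.mem_sdiff, Finset.mem_range] at hq ⊢
    obtain ⟨⟨hq1, hq2W, hq2B⟩, hord, hdiff⟩ := hq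
    obtain ⟨hq1le, hq1A⟩ := M2 hs hp hq1
    refine ⟨⟨⟨by omega, ?_⟩, hq1A⟩, by omega, by omega⟩
    intro hmem
    apply hq2B
    have hx := M3 hs hp hmem (by omega)
    have : W - 1 - (W - 1 - q2) = q2 := by omega
    rwa [this] at hx
  case hj =>
    rintro ⟨p1, p2⟩ hp'
    simp only [Finset.mem_filter, Finset.mem_product, Finset.mem_sdiff, Finset.mem_range] at hp' ⊢
    obtain ⟨⟨⟨hp1t, hp1A⟩, hp2⟩, hord, hdiff⟩ := hp'
    have hp1W : p1 < W := M4 hs hp hp1t hp1A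
    have hb := M3 hs hp hp2 (by omega)
    refine ⟨⟨hb, by omega, ?_⟩, by omega, by omega⟩
    intro hmem
    apply hp1A
    have hx := (M2 hs hp hmem).2
    have : W - 1 - (W - 1 - p1) = p1 := by omega
    rwa [this] at hx
  case li =>
    rintro ⟨q1, q2⟩ hq
    simp only [Finset.mem_filter, Finset.mem_product, Finset.mem_sdiff, Finset.mem_range] at hq
    obtain ⟨⟨hq1, hq2W, hq2B⟩, hord, hdiff⟩ := hq
    have hq1W := B_lt hs hp q1 hq1
    show (W - 1 - (W - 1 - q1), W - 1 - (W - 1 - q2)) = (q1, q2)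
    have e1 : W - 1 - (W - 1 - q1) = q1 := by omega
    have e2 : W - 1 - (W - 1 - q2) = q2 := by omega
    rw [e1, e2]
  case ri =>
    rintro ⟨p1, p2⟩ hp'
    simp only [Finset.mem_filter, Finset.mem_product, Finset.mem_sdiff, Finset.mem_range] at hp'
    obtain ⟨⟨⟨hp1t, hp1A⟩, hp2⟩, hord, hdiff⟩ := hp'
    have hp1W : p1 < W := M4 hs hp hp1t hp1A
    show (W - 1 - (W - 1 - p1), W - 1 - (W - 1 - p2)) = (p1, p2)
    have e1 : W - 1 - (W - 1 - p1) = p1 := by omega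
    have e2 : W - 1 - (W - 1 - p2) = p2 := by omega
    rw [e1, e2]

theorem remnant_count {l : List ℕ} (hs : l.Pairwise (· ≥ ·)) (hp : ∀ x ∈ l, 0 < x) (n : ℕ) :
    Multiset.count n (hookMultiset (remnant l))
      = cnt (Finset.range (l.length + l.headD 0) \ firstColHooks l) (firstColHooks l) n := by
  rw [main_count (remnant l) (remnant_sorted hs) remnant_pos
    (l.headD 0 + (remnant l).length) (by have := remnant_head_le hs; omega) n]
  exact remnant_cnt hs hp n





lemma cnt_AA' (A : Finset ℕ) (t n : ℕ) (hA : A ⊆ Finset.range t) (hn : 0 < n) :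
    cnt A (Finset.range t \ A) n = (A.filter fun a => n ≤ a ∧ a - n ∉ A).card := by
  unfold cnt
  refine Finset.card_bij (fun q _ => q.1) ?hi ?inj ?surj
  case hi =>
    rintro ⟨q1, q2⟩ hq
    simp only [Finset.mem_filter, Finset.mem_product, Finset.mem_sdiff, Finset.mem_range] at hq ⊢
    obtain ⟨⟨h1, h2, h3⟩, h4, h5⟩ := hq
    have : q1 - n = q2 := by omega
    exact ⟨h1, by omega, this ▸ h3⟩
  case inj =>
    rintro ⟨q1, q2⟩ hq ⟨p1, p2⟩ hp he
    simp only [Finset.mem_filter, Finset.mem_product] at hq hp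
    simp only at he
    subst he
    have : q2 = p2 := by omega
    rw [this]
  case surj =>
    intro a ha
    simp only [Finset.mem_filter] at ha
    obtain ⟨h1, h2, h3⟩ := ha
    have hat : a < t := Finset.mem_range.mp (hA h1)
    refine ⟨(a, a - n), ?_, rfl⟩
    simp only [Finset.mem_filter, Finset.mem_product, Finset.mem_sdiff, Finset.mem_range]
    exact ⟨⟨h1, by omega, h3⟩, by omega, by omega⟩

lemma cnt_A'A (A : Finset ℕ) (t n : ℕ) (hA : A ⊆ Finset.range t) (hn : 0 < n) :
    cnt (Finset.range t \ A) A n = (A.filter fun b => b + n < t ∧ b + n ∉ A).card := by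
  unfold cnt
  refine Finset.card_bij (fun q _ => q.2) ?hi ?inj ?surj
  case hi =>
    rintro ⟨q1, q2⟩ hq
    simp only [Finset.mem_filter, Finset.mem_product, Finset.mem_sdiff, Finset.mem_range] at hq ⊢
    obtain ⟨⟨⟨h1, h2⟩, h3⟩, h4, h5⟩ := hq
    have : q2 + n = q1 := by omega
    exact ⟨h3, by omega, this ▸ h2⟩
  case inj =>
    rintro ⟨q1, q2⟩ hq ⟨p1, p2⟩ hp he
    simp only [Finset.mem_filter, Finset.mem_product] at hq hp
    simp only at he
    subst he
    have : q1 = p1 := by omega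
    rw [this]
  case surj =>
    intro b hb
    simp only [Finset.mem_filter] at hb
    obtain ⟨h1, h2, h3⟩ := hb
    refine ⟨(b + n, b), ?_, rfl⟩
    simp only [Finset.mem_filter, Finset.mem_product, Finset.mem_sdiff, Finset.mem_range]
    exact ⟨⟨⟨h2, h3⟩, h1⟩, by omega, by omega⟩

lemma middle (A : Finset ℕ) (t n : ℕ) (hA : A ⊆ Finset.range t) (hn : 0 < n) :
    (A.filter fun a => n ≤ a ∧ a - n ∈ A).card
      = (A.filter fun b => b + n < t ∧ b + n ∈ A).card := by
  refine Finset.card_bij (fun a _ => a - n) ?hi ?inj ?surj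
  case hi =>
    intro a ha
    simp only [Finset.mem_filter] at ha ⊢
    obtain ⟨h1, h2, h3⟩ := ha
    have hat : a < t := Finset.mem_range.mp (hA h1)
    have he : a - n + n = a := by omega
    exact ⟨h3, by omega, by rw [he]; exact h1⟩
  case inj =>
    intro a ha a' ha' he
    simp only [Finset.mem_filter] at ha ha'
    have he' : a - n = a' - n := he
    omega
  case surj =>
    intro b hb
    simp only [Finset.mem_filter] at hb
    obtain ⟨h1, h2, h3⟩ := hb
    refine ⟨b + n, Finset.mem_filter.mpr ⟨h3, by omega, ?_⟩, ?_⟩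
    · have he : b + n - n = b := by omega
      rw [he]; exact h1
    · show b + n - n = b
      omega

lemma filter_split (A : Finset ℕ) (n : ℕ) (P : ℕ → Prop) [DecidablePred P] :
    (A.filter fun a => P a ∧ a - n ∉ A).card + (A.filter fun a => P a ∧ a - n ∈ A).card
      = (A.filter P).card := by
  classical
  rw [← Finset.card_filter_add_card_filter_not (s := A.filter P)
    (p := fun a => a - n ∉ A)]
  rw [Finset.filter_filter, Finset.filter_filter]
  congr 1
  apply congrArg
  apply Finset.filter_congr
  intro a _
  tauto

lemma filter_split' (A : Finset ℕ) (n t : ℕ) :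
    (A.filter fun a => a + n < t ∧ a + n ∉ A).card + (A.filter fun a => a + n < t ∧ a + n ∈ A).card
      = (A.filter fun a => a + n < t).card := by
  classical
  rw [← Finset.card_filter_add_card_filter_not (s := A.filter fun a => a + n < t)
    (p := fun a => a + n ∉ A)]
  rw [Finset.filter_filter, Finset.filter_filter]
  congr 1
  apply congrArg
  apply Finset.filter_congr
  intro a _
  tauto

lemma compl_count (A : Finset ℕ) (k : ℕ) :
    (A.filter fun a => k ≤ a).card + (A.filter fun a => a < k).card = A.card := by
  classical
  rw [← Finset.card_filter_add_card_filter_not (s := A) (p := fun a => k ≤ a)]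
  congr 1
  apply congrArg
  apply Finset.filter_congr
  intro a _
  omega

lemma shift_filter (A : Finset ℕ) (n t : ℕ) :
    (A.filter fun a => a + n < t) = (A.filter fun a => a < t - n) := by
  apply Finset.filter_congr
  intro a _
  omega

/-- The core antisymmetry identity. -/
lemma core_identity (A : Finset ℕ) (t n : ℕ) (hA : A ⊆ Finset.range t)
    (hn1 : 0 < n) (hn2 : n < t) :
    (cnt A (Finset.range t \ A) n : ℤ) - cnt A (Finset.range t \ A) (t - n)
      = (cnt (Finset.range t \ A) A n : ℤ) - cnt (Finset.range t \ A) A (t - n) := by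
  have hn1' : 0 < t - n := by omega
  have e1 := cnt_AA' A t n hA hn1
  have e2 := cnt_A'A A t n hA hn1
  have e3 := cnt_AA' A t (t - n) hA hn1'
  have e4 := cnt_A'A A t (t - n) hA hn1'
  have f1 := filter_split A n (fun a => n ≤ a)
  have f2 := filter_split A (t - n) (fun a => t - n ≤ a)
  have f3 := filter_split' A n t
  have f4 := filter_split' A (t - n) t
  have m1 := middle A t n hA hn1
  have m2 := middle A t (t - n) hA hn1'
  have c1 := compl_count A n
  have c2 := compl_count A (t - n)
  have s1 := congrArg Finset.card (shift_filter A n t)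
  have s2 := congrArg Finset.card (shift_filter A (t - n) t)
  have hmm : t - (t - n) = n := by omega
  rw [hmm] at s2
  omega


end Aux

open Aux

/-- `H_i(λ) - H_{t-i}(λ) = H_i(λ̃) - H_{t-i}(λ̃)` for every integer `i`. -/
theorem stmt17 (l : List ℕ) (hl : IsPartition l) (hne : l ≠ []) :
    ∀ i : ℤ,
      (Multiset.count i ((hookMultiset l).map (Nat.cast : ℕ → ℤ)) : ℤ)
        - Multiset.count (((l.length + l.headD 0 : ℕ) : ℤ) - i)
            ((hookMultiset l).map (Nat.cast : ℕ → ℤ))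
      = (Multiset.count i ((hookMultiset (remnant l)).map (Nat.cast : ℕ → ℤ)) : ℤ)
        - Multiset.count (((l.length + l.headD 0 : ℕ) : ℤ) - i)
            ((hookMultiset (remnant l)).map (Nat.cast : ℕ → ℤ)) := by
  obtain ⟨hs, hp⟩ := hl
  set t : ℕ := l.length + l.headD 0 with ht
  have hAsub : firstColHooks l ⊆ Finset.range t := by
    intro b hb
    exact Finset.mem_range.mpr (fch_lt hs hp b hb)
  have countN : ∀ n : ℕ, Multiset.count ((n : ℤ)) ((hookMultiset l).map (Nat.cast : ℕ → ℤ))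
      = cnt (firstColHooks l) (Finset.range t \ firstColHooks l) n := by
    intro n
    rw [Multiset.count_map_eq_count' _ _ (fun a b h => by exact_mod_cast h)]
    exact main_count l hs hp t le_rfl n
  have countR : ∀ n : ℕ, Multiset.count ((n : ℤ)) ((hookMultiset (remnant l)).map (Nat.cast : ℕ → ℤ))
      = cnt (Finset.range t \ firstColHooks l) (firstColHooks l) n := by
    intro n
    rw [Multiset.count_map_eq_count' _ _ (fun a b h => by exact_mod_cast h)]
    exact remnant_count hs hp n
  have countz : ∀ (m : Multiset ℕ) (j : ℤ), j < 0 → Multiset.count j (m.map (Nat.cast : ℕ → ℤ)) = 0 := by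
    intro m j hj
    apply Multiset.count_eq_zero_of_notMem
    intro hmem
    rw [Multiset.mem_map] at hmem
    obtain ⟨x, _, hx⟩ := hmem
    omega
  have zeroN : ∀ j : ℤ, (j ≤ 0 ∨ (t : ℤ) ≤ j) →
      Multiset.count j ((hookMultiset l).map (Nat.cast : ℕ → ℤ)) = 0 := by
    intro j hj
    rcases lt_or_ge j 0 with h | h
    · exact countz _ j h
    · have hj' : j = ((j.toNat : ℕ) : ℤ) := by omega
      rw [hj', countN]
      rcases hj with h1 | h1
      · have : j.toNat = 0 := by omega
        rw [this]; exact cnt_zero_n0 _ _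
      · exact cnt_zero_of_big (fun s hsm => fch_lt hs hp s hsm) (by omega)
  have zeroR : ∀ j : ℤ, (j ≤ 0 ∨ (t : ℤ) ≤ j) →
      Multiset.count j ((hookMultiset (remnant l)).map (Nat.cast : ℕ → ℤ)) = 0 := by
    intro j hj
    rcases lt_or_ge j 0 with h | h
    · exact countz _ j h
    · have hj' : j = ((j.toNat : ℕ) : ℤ) := by omega
      rw [hj', countR]
      rcases hj with h1 | h1
      · have : j.toNat = 0 := by omega
        rw [this]; exact cnt_zero_n0 _ _
      · refine cnt_zero_of_big ?_ (by omega : t ≤ j.toNat)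
        intro s hsm
        rw [Finset.mem_sdiff, Finset.mem_range] at hsm
        exact hsm.1
  intro i
  by_cases hcase : 0 < i ∧ i < (t : ℤ)
  · obtain ⟨h1, h2⟩ := hcase
    have hn : i = ((i.toNat : ℕ) : ℤ) := by omega
    have hn2 : (t : ℤ) - i = (((t - i.toNat : ℕ)) : ℤ) := by omega
    rw [hn2]
    rw (occs := .pos [1, 3]) [hn]
    rw [countN, countN, countR, countR]
    exact core_identity (firstColHooks l) t i.toNat hAsub (by omega) (by omega)
  · push_neg at hcase
    rcases le_or_gt i 0 with h | h
    · rw [zeroN i (Or.inl h), zeroN ((t:ℤ) - i) (Or.inr (by omega)),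
        zeroR i (Or.inl h), zeroR ((t:ℤ) - i) (Or.inr (by omega))]
    · have h2 : (t : ℤ) ≤ i := hcase h
      rw [zeroN i (Or.inr h2), zeroN ((t:ℤ) - i) (Or.inl (by omega)),
        zeroR i (Or.inr h2), zeroR ((t:ℤ) - i) (Or.inl (by omega))]
end

section
/- Let λ be a partition with r rows and c columns, t = r + c, A its set of first-column hook lengths and A′ the complement of A in {0,…,t−1}. Define the ∞-partition E_∞(λ) of height t with characteristic set C = {a + t + 1 : a ∈ A} ∪ {a′ + 1 : a′ ∈ A′}. Then the multiset of missing hook numbers of E_∞(λ), namely the multiset of all positive differences {c_1 − c_2 : c_1, c_2 ∈ C, c_1 > c_2}, is determined by the hook-length multiset H(λ) alone; in particular, if μ is another partition with H(μ) = H(λ) (with the same t), then E_∞(λ) and E_∞(μ) have equal missing-hook-number multisets. -/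
namespace Stmt18Aux

open Finset

/-- single-variable count -/
def cnt (S T : Finset ℕ) (v : ℕ) : ℕ := (T.filter fun b => b + v ∈ S ∧ 0 < v).card

lemma count_posDiffs (S T : Finset ℕ) (v : ℕ) :
    Multiset.count v (posDiffs S T) = cnt S T v := by
  unfold posDiffs cnt
  rw [Multiset.count_map]
  have h1 : Multiset.filter (fun a => v = a.1 - a.2) ((S ×ˢ T).filter fun q => q.2 < q.1).val
      = ((S ×ˢ T).filter fun q => q.1 = q.2 + v ∧ 0 < v).val := by
    rw [Finset.filter_val, Finset.filter_val, Multiset.filter_filter]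
    exact Multiset.filter_congr (fun q _ => by omega)
  rw [h1]
  show ((S ×ˢ T).filter fun q => q.1 = q.2 + v ∧ 0 < v).card = _
  refine Finset.card_bij' (fun q _ => q.2) (fun b _ => (b + v, b)) ?_ ?_ ?_ ?_
  · intro q hq
    simp only [Finset.mem_filter, Finset.mem_product] at hq ⊢
    obtain ⟨⟨h1, h2⟩, h3, h4⟩ := hq
    exact ⟨h2, by rw [← h3]; exact h1, h4⟩
  · intro b hb
    simp only [Finset.mem_filter, Finset.mem_product] at hb ⊢
    exact ⟨⟨hb.2.1, hb.1⟩, trivial, hb.2.2⟩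
  · intro q hq
    simp only [Finset.mem_filter, Finset.mem_product] at hq
    exact Prod.ext (by omega) rfl
  · intro b hb; rfl

lemma cnt_zero (S T : Finset ℕ) : cnt S T 0 = 0 := by
  simp [cnt]

lemma cardsplit (s : Finset ℕ) (p q : ℕ → Prop) [DecidablePred p] [DecidablePred q] :
    (s.filter fun b => p b ∧ q b).card + (s.filter fun b => p b ∧ ¬ q b).card
      = (s.filter p).card := by
  rw [← Finset.filter_filter, ← Finset.filter_filter]
  exact Finset.card_filter_add_card_filter_not q

section Core

variable {t : ℕ} {B : Finset ℕ}

/-- union over complement split -/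
lemma card_filter_union_compl (hB : B ⊆ range t) (p : ℕ → Prop) [DecidablePred p] :
    (B.filter p).card + ((range t \ B).filter p).card = ((range t).filter p).card := by
  rw [← Finset.card_union_of_disjoint, ← Finset.filter_union, Finset.union_sdiff_of_subset hB]
  exact Finset.disjoint_filter_filter (Finset.disjoint_sdiff)

lemma eq_i (hB : B ⊆ range t) (v : ℕ) (hv : 0 < v) :
    cnt B (range t \ B) v + cnt B B v + (B.filter fun a => a < v).card = B.card := by
  unfold cnt
  have h2 : (B.filter fun b => b + v ∈ B ∧ 0 < v).card
      + ((range t \ B).filter fun b => b + v ∈ B ∧ 0 < v).card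
      = ((range t).filter fun b => b + v ∈ B ∧ 0 < v).card :=
    card_filter_union_compl hB _
  have h3 : ((range t).filter fun b => b + v ∈ B ∧ 0 < v).card
      = (B.filter fun a => v ≤ a).card := by
    refine Finset.card_bij' (fun b _ => b + v) (fun a _ => a - v) ?_ ?_ ?_ ?_
    · intro b hb
      simp only [Finset.mem_filter, Finset.mem_range] at hb ⊢
      exact ⟨hb.2.1, by omega⟩
    · intro a ha
      simp only [Finset.mem_filter, Finset.mem_range] at ha ⊢
      have := hB ha.1
      simp only [Finset.mem_range] at this
      refine ⟨by omega, ?_, hv⟩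
      have : a - v + v = a := by omega
      rw [this]; exact ha.1
    · intro b _; omega
    · intro a ha
      simp only [Finset.mem_filter] at ha
      omega
  have h4 : (B.filter fun a => v ≤ a).card + (B.filter fun a => a < v).card = B.card := by
    have h5 : (B.filter fun a => ¬ v ≤ a) = (B.filter fun a => a < v) :=
      Finset.filter_congr (fun x _ => by omega)
    rw [← h5]
    exact Finset.card_filter_add_card_filter_not _
  omega

lemma eq_ii (hB : B ⊆ range t) (v : ℕ) (hv : 0 < v) :
    cnt (range t \ B) B v + cnt B B v = (B.filter fun a => a < t - v).card := by
  unfold cnt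
  have h1 : (B.filter fun b => b + v ∈ range t \ B ∧ 0 < v)
      = ((B.filter fun b => b + v < t).filter fun b => ¬ (b + v ∈ B)) := by
    rw [Finset.filter_filter]
    apply Finset.filter_congr
    intro x _
    simp only [Finset.mem_sdiff, Finset.mem_range]
    tauto
  have h2 : (B.filter fun b => b + v ∈ B ∧ 0 < v)
      = ((B.filter fun b => b + v < t).filter fun b => b + v ∈ B) := by
    rw [Finset.filter_filter]
    apply Finset.filter_congr
    intro x _
    constructor
    · rintro ⟨h, _⟩
      have := hB h
      simp only [Finset.mem_range] at this
      exact ⟨this, h⟩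
    · rintro ⟨h, h'⟩; exact ⟨h', hv⟩
  rw [h1, h2]
  rw [Nat.add_comm]
  rw [Finset.card_filter_add_card_filter_not (fun b => b + v ∈ B)]
  congr 1
  exact Finset.filter_congr (fun x _ => by omega)

lemma eq_F2 (hB : B ⊆ range t) (v : ℕ) (hv : 0 < v) (hvt : v < t) :
    cnt B (range t \ B) v + cnt (range t \ B) B (t - v)
      = cnt B (range t \ B) (t - v) + cnt (range t \ B) B v := by
  have i1 := eq_i hB v hv
  have i2 := eq_i hB (t - v) (by omega)
  have ii1 := eq_ii hB v hv
  have ii2 := eq_ii hB (t - v) (by omega)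
  have hsub : t - (t - v) = v := by omega
  rw [hsub] at ii2
  omega

lemma eq_F1 (hB : B ⊆ range t) (v : ℕ) (hv : 0 < v) (hvt : v < t) :
    cnt B B v + cnt (range t \ B) (range t \ B) v
      + cnt B (range t \ B) v + cnt (range t \ B) B v = t - v := by
  classical
  set Bc := range t \ B with hBc
  have memBc : ∀ x, x ∈ Bc ↔ (x < t ∧ x ∉ B) := by
    intro x; simp [hBc, Finset.mem_sdiff, Finset.mem_range]
  have memB_lt : ∀ x, x ∈ B → x < t := by
    intro x hx; have := hB hx; simpa using this
  have c1 : cnt B B v = ((range t).filter fun b => (b + v < t ∧ b ∈ B) ∧ b + v ∈ B).card := by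
    unfold cnt
    congr 1
    ext x
    simp only [Finset.mem_filter, Finset.mem_range]
    constructor
    · rintro ⟨hx, hxv, _⟩
      exact ⟨memB_lt _ hx, ⟨memB_lt _ hxv, hx⟩, hxv⟩
    · rintro ⟨_, ⟨_, hx⟩, hxv⟩
      exact ⟨hx, hxv, hv⟩
  have c2 : cnt Bc Bc v = ((range t).filter fun b => (b + v < t ∧ b ∉ B) ∧ b + v ∉ B).card := by
    unfold cnt
    congr 1
    ext x
    simp only [Finset.mem_filter, Finset.mem_range, memBc]
    constructor
    · rintro ⟨⟨h1, h2⟩, ⟨h3, h4⟩, _⟩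
      exact ⟨h1, ⟨by omega, h2⟩, h4⟩
    · rintro ⟨h1, ⟨h2, h3⟩, h4⟩
      exact ⟨⟨h1, h3⟩, ⟨by omega, h4⟩, hv⟩
  have c3 : cnt B Bc v = ((range t).filter fun b => (b + v < t ∧ b ∉ B) ∧ b + v ∈ B).card := by
    unfold cnt
    congr 1
    ext x
    simp only [Finset.mem_filter, Finset.mem_range, memBc]
    constructor
    · rintro ⟨⟨h1, h2⟩, h3, _⟩
      exact ⟨h1, ⟨memB_lt _ h3, h2⟩, h3⟩
    · rintro ⟨h1, ⟨h2, h3⟩, h4⟩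
      exact ⟨⟨h1, h3⟩, h4, hv⟩
  have c4 : cnt Bc B v = ((range t).filter fun b => (b + v < t ∧ b ∈ B) ∧ b + v ∉ B).card := by
    unfold cnt
    congr 1
    ext x
    simp only [Finset.mem_filter, Finset.mem_range, memBc]
    constructor
    · rintro ⟨h1, ⟨h2, h3⟩, _⟩
      exact ⟨memB_lt _ h1, ⟨h2, h1⟩, h3⟩
    · rintro ⟨h1, ⟨h2, h3⟩, h4⟩
      exact ⟨h3, ⟨h2, h4⟩, hv⟩
  have s1 := cardsplit (range t) (fun b => b + v < t ∧ b ∈ B) (fun b => b + v ∈ B)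
  have s2 := cardsplit (range t) (fun b => b + v < t ∧ b ∉ B) (fun b => b + v ∈ B)
  have s3 := cardsplit (range t) (fun b => b + v < t) (fun b => b ∈ B)
  have s1' : ((range t).filter fun b => (b + v < t ∧ b ∉ B) ∧ ¬ b + v ∈ B).card
      = ((range t).filter fun b => (b + v < t ∧ b ∉ B) ∧ b + v ∉ B).card := rfl
  have s4 : ((range t).filter fun b => b + v < t).card = t - v := by
    have : (range t).filter (fun b => b + v < t) = range (t - v) := by
      ext x
      simp only [Finset.mem_filter, Finset.mem_range]
      omega
    rw [this, Finset.card_range]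
  have s3a : ((range t).filter fun b => b + v < t ∧ b ∈ B)
      = ((range t).filter fun b => b + v < t).filter fun b => b ∈ B := by
    rw [Finset.filter_filter]
  have s3b : ((range t).filter fun b => b + v < t ∧ b ∉ B)
      = ((range t).filter fun b => b + v < t).filter fun b => ¬ b ∈ B := by
    rw [Finset.filter_filter]
  have s5 : ((range t).filter fun b => b + v < t ∧ b ∈ B).card
      + ((range t).filter fun b => b + v < t ∧ b ∉ B).card = t - v := by
    rw [s3a, s3b, Finset.card_filter_add_card_filter_not, s4]
  rw [c1, c2, c3, c4]
  omega

/-- the characteristic set -/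
def Ch (t : ℕ) (B : Finset ℕ) : Finset ℕ :=
  (B.image fun a => a + t + 1) ∪ ((range t \ B).image fun a => a + 1)

lemma cnt_big (hB : B ⊆ range t) (v : ℕ) (hv : t ≤ v) : cnt B B v = 0 := by
  rw [cnt, Finset.card_eq_zero, Finset.filter_eq_empty_iff]
  intro b _ hc
  have := hB hc.1
  simp only [Finset.mem_range] at this
  omega

lemma X_split (hB : B ⊆ range t) (v : ℕ) (hv : 0 < v) :
    cnt (Ch t B) (Ch t B) v = cnt B B v + cnt (range t \ B) (range t \ B) v
      + ((B ×ˢ (range t \ B)).filter fun q => q.1 + t = q.2 + v).card := by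
  classical
  set Bc := range t \ B with hBcdef
  set Hi := B.image (fun a => a + t + 1) with hHi
  set Lo := Bc.image (fun a => a + 1) with hLo
  have memHi : ∀ x, x ∈ Hi ↔ ∃ a ∈ B, a + t + 1 = x := by
    intro x; simp [hHi, Finset.mem_image]
  have memLo : ∀ x, x ∈ Lo ↔ ∃ a ∈ Bc, a + 1 = x := by
    intro x; simp [hLo, Finset.mem_image]
  have memBc : ∀ x, x ∈ Bc → x < t := by
    intro x hx
    rw [hBcdef] at hx
    simp only [Finset.mem_sdiff, Finset.mem_range] at hx
    exact hx.1
  have memB : ∀ x, x ∈ B → x < t := by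
    intro x hx; have := hB hx; simpa using this
  have hCh : Ch t B = Hi ∪ Lo := rfl
  have disjHiLo : Disjoint Hi Lo := by
    rw [Finset.disjoint_left]
    intro x hx hx'
    rw [memHi] at hx
    rw [memLo] at hx'
    obtain ⟨a, _, ha⟩ := hx
    obtain ⟨b, hbm, hb⟩ := hx'
    have := memBc b hbm
    omega
  have step1 : cnt (Ch t B) (Ch t B) v
      = (Hi.filter fun b => b + v ∈ Ch t B ∧ 0 < v).card
        + (Lo.filter fun b => b + v ∈ Ch t B ∧ 0 < v).card := by
    rw [cnt, hCh, Finset.filter_union]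
    exact Finset.card_union_of_disjoint (Finset.disjoint_filter_filter disjHiLo)
  have stepHi : (Hi.filter fun b => b + v ∈ Ch t B ∧ 0 < v).card = cnt B B v := by
    rw [cnt]
    refine Finset.card_bij' (fun b _ => b - (t + 1)) (fun a _ => a + t + 1) ?_ ?_ ?_ ?_
    · intro b hb
      simp only [Finset.mem_filter] at hb
      obtain ⟨hbHi, hbC, _⟩ := hb
      rw [memHi] at hbHi
      obtain ⟨a, haB, ha⟩ := hbHi
      rw [hCh, Finset.mem_union] at hbC
      have hnotLo : ¬ (b + v ∈ Lo) := by
        rw [memLo]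
        rintro ⟨x, hxm, hx⟩
        have := memBc x hxm
        omega
      have hbHi2 : b + v ∈ Hi := by tauto
      rw [memHi] at hbHi2
      obtain ⟨a', ha'B, ha'⟩ := hbHi2
      have h1 : b - (t + 1) = a := by omega
      have h2 : a + v = a' := by omega
      rw [h1]
      simp only [Finset.mem_filter]
      exact ⟨haB, by rw [h2]; exact ha'B, hv⟩
    · intro a ha
      simp only [Finset.mem_filter] at ha ⊢
      constructor
      · rw [memHi]; exact ⟨a, ha.1, rfl⟩
      refine ⟨?_, hv⟩
      rw [hCh, Finset.mem_union, memHi]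
      left
      exact ⟨a + v, ha.2.1, by omega⟩
    · intro b hb
      simp only [Finset.mem_filter] at hb
      have := hb.1
      rw [memHi] at this
      obtain ⟨a, _, ha⟩ := this
      omega
    · intro a _; omega
  have stepLoSplit : (Lo.filter fun b => b + v ∈ Ch t B ∧ 0 < v)
      = (Lo.filter fun b => b + v ∈ Lo ∧ 0 < v) ∪ (Lo.filter fun b => b + v ∈ Hi ∧ 0 < v) := by
    ext x
    simp only [Finset.mem_filter, Finset.mem_union, hCh]
    tauto
  have disjLo2 : Disjoint (Lo.filter fun b => b + v ∈ Lo ∧ 0 < v)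
      (Lo.filter fun b => b + v ∈ Hi ∧ 0 < v) := by
    rw [Finset.disjoint_left]
    intro x hx hx'
    simp only [Finset.mem_filter] at hx hx'
    exact (Finset.disjoint_right.1 disjHiLo) hx.2.1 hx'.2.1
  have stepLo1 : (Lo.filter fun b => b + v ∈ Lo ∧ 0 < v).card = cnt Bc Bc v := by
    rw [cnt]
    refine Finset.card_bij' (fun b _ => b - 1) (fun a _ => a + 1) ?_ ?_ ?_ ?_
    · intro b hb
      simp only [Finset.mem_filter] at hb
      obtain ⟨hbLo, hbC, _⟩ := hb
      rw [memLo] at hbLo hbC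
      obtain ⟨a, haB, ha⟩ := hbLo
      obtain ⟨a', ha'B, ha'⟩ := hbC
      have h1 : b - 1 = a := by omega
      have h2 : a + v = a' := by omega
      rw [h1]
      simp only [Finset.mem_filter]
      exact ⟨haB, by rw [h2]; exact ha'B, hv⟩
    · intro a ha
      simp only [Finset.mem_filter] at ha ⊢
      refine ⟨?_, ?_, hv⟩
      · rw [memLo]; exact ⟨a, ha.1, rfl⟩
      · rw [memLo]; exact ⟨a + v, ha.2.1, by omega⟩
    · intro b hb
      simp only [Finset.mem_filter] at hb
      have := hb.1
      rw [memLo] at this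
      obtain ⟨a, _, ha⟩ := this
      omega
    · intro a _; omega
  have stepLo2 : (Lo.filter fun b => b + v ∈ Hi ∧ 0 < v).card
      = ((B ×ˢ Bc).filter fun q => q.1 + t = q.2 + v).card := by
    symm
    refine Finset.card_bij' (fun q _ => q.2 + 1) (fun b _ => (b + v - (t + 1), b - 1)) ?_ ?_ ?_ ?_
    · intro q hq
      simp only [Finset.mem_filter, Finset.mem_product] at hq ⊢
      obtain ⟨⟨h1, h2⟩, h3⟩ := hq
      refine ⟨?_, ?_, hv⟩
      · rw [memLo]; exact ⟨q.2, h2, rfl⟩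
      · rw [memHi]; exact ⟨q.1, h1, by omega⟩
    · intro b hb
      simp only [Finset.mem_filter, Finset.mem_product] at hb ⊢
      obtain ⟨hbLo, hbHi, _⟩ := hb
      rw [memLo] at hbLo
      rw [memHi] at hbHi
      obtain ⟨a, haB, ha⟩ := hbLo
      obtain ⟨a', ha'B, ha'⟩ := hbHi
      have h1 : b + v - (t + 1) = a' := by omega
      have h2 : b - 1 = a := by omega
      rw [h1, h2]
      exact ⟨⟨ha'B, haB⟩, by omega⟩
    · intro q hq
      simp only [Finset.mem_filter, Finset.mem_product] at hq
      obtain ⟨⟨h1, h2⟩, h3⟩ := hq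
      have hq1 := memB _ h1
      have hq2 := memBc _ h2
      exact Prod.ext (by simp; omega) (by simp)
    · intro b hb
      simp only [Finset.mem_filter] at hb
      have := hb.1
      rw [memLo] at this
      obtain ⟨a, _, ha⟩ := this
      omega
  rw [step1, stepHi, stepLoSplit, Finset.card_union_of_disjoint disjLo2, stepLo1, stepLo2]
  ring

lemma X_lt (hB : B ⊆ range t) (v : ℕ) (hv : 0 < v) (hvt : v < t) :
    ((B ×ˢ (range t \ B)).filter fun q => q.1 + t = q.2 + v).card
      = cnt (range t \ B) B (t - v) := by
  rw [cnt]
  refine Finset.card_bij' (fun q _ => q.1) (fun a _ => (a, a + (t - v))) ?_ ?_ ?_ ?_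
  · intro q hq
    simp only [Finset.mem_filter, Finset.mem_product] at hq ⊢
    obtain ⟨⟨h1, h2⟩, h3⟩ := hq
    have : q.1 + (t - v) = q.2 := by omega
    rw [this]
    exact ⟨h1, h2, by omega⟩
  · intro a ha
    simp only [Finset.mem_filter, Finset.mem_product] at ha ⊢
    exact ⟨⟨ha.1, ha.2.1⟩, by omega⟩
  · intro q hq
    simp only [Finset.mem_filter, Finset.mem_product] at hq
    exact Prod.ext rfl (by simp; omega)
  · intro a _; rfl

lemma X_eq (v : ℕ) (hv : v = t) :
    ((B ×ˢ (range t \ B)).filter fun q => q.1 + t = q.2 + v).card = 0 := by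
  rw [Finset.card_eq_zero, Finset.filter_eq_empty_iff]
  intro q hq
  simp only [Finset.mem_product, Finset.mem_sdiff, Finset.mem_range] at hq
  intro hc
  have : q.1 = q.2 := by omega
  rw [this] at hq
  exact hq.2.2 hq.1

lemma X_gt (v : ℕ) (hvt : t < v) :
    ((B ×ˢ (range t \ B)).filter fun q => q.1 + t = q.2 + v).card
      = cnt B (range t \ B) (v - t) := by
  rw [cnt]
  refine Finset.card_bij' (fun q _ => q.2) (fun b _ => (b + (v - t), b)) ?_ ?_ ?_ ?_
  · intro q hq
    simp only [Finset.mem_filter, Finset.mem_product] at hq ⊢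
    obtain ⟨⟨h1, h2⟩, h3⟩ := hq
    have : q.2 + (v - t) = q.1 := by omega
    rw [this]
    exact ⟨h2, h1, by omega⟩
  · intro a ha
    simp only [Finset.mem_filter, Finset.mem_product] at ha ⊢
    exact ⟨⟨ha.2.1, ha.1⟩, by omega⟩
  · intro q hq
    simp only [Finset.mem_filter, Finset.mem_product] at hq
    exact Prod.ext (by simp; omega) rfl
  · intro a _; rfl

lemma NM1 (hB : B ⊆ range t) (v : ℕ) (hv : 0 < v) (hvt : v < t) :
    cnt (Ch t B) (Ch t B) v + 2 * cnt B (range t \ B) v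
      = (t - v) + cnt B (range t \ B) (t - v) := by
  have h1 := X_split hB v hv
  have h2 := X_lt hB v hv hvt
  have h3 := eq_F1 hB v hv hvt
  have h4 := eq_F2 hB v hv hvt
  omega

lemma NM2 (hB : B ⊆ range t) (ht : 0 < t) (v : ℕ) (hv : t ≤ v) :
    cnt (Ch t B) (Ch t B) v = cnt B (range t \ B) (v - t) := by
  have h1 := X_split hB v (by omega)
  have h2 := cnt_big hB v hv
  have h3 := cnt_big (B := range t \ B) Finset.sdiff_subset v hv
  rcases eq_or_lt_of_le hv with heq | hlt
  · rw [X_eq (B := B) v heq.symm] at h1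
    have : v - t = 0 := by omega
    rw [this, cnt_zero]
    omega
  · rw [X_gt (B := B) v hlt] at h1
    omega

lemma envCore (t : ℕ) (ht : 0 < t) (B1 B2 : Finset ℕ)
    (h1 : B1 ⊆ range t) (h2 : B2 ⊆ range t)
    (hcnt : ∀ w, cnt B1 (range t \ B1) w = cnt B2 (range t \ B2) w) :
    posDiffs (Ch t B1) (Ch t B1) = posDiffs (Ch t B2) (Ch t B2) := by
  rw [Multiset.ext]
  intro v
  rw [count_posDiffs, count_posDiffs]
  rcases Nat.eq_zero_or_pos v with rfl | hv
  · rw [cnt_zero, cnt_zero]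
  rcases lt_or_ge v t with hvt | hvt
  · have a1 := NM1 h1 v hv hvt
    have a2 := NM1 h2 v hv hvt
    have b1 := hcnt v
    have b2 := hcnt (t - v)
    omega
  · rw [NM2 h1 ht v hvt, NM2 h2 ht v hvt, hcnt]

end Core

end Stmt18Aux

namespace Stmt18Beta

open Finset

def beta (l : List ℕ) (i : ℕ) : ℕ := l.getD i 0 + (l.length - i - 1)

def gam (l : List ℕ) (i j : ℕ) : ℕ :=
  j + ((Finset.range l.length).filter fun k => i < k ∧ l.getD k 0 ≤ j).card

section Part

variable {l : List ℕ} (hl : IsPartition l)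
include hl

lemma L_anti (i j : ℕ) (hij : i ≤ j) (hj : j < l.length) : l.getD j 0 ≤ l.getD i 0 := by
  rcases eq_or_lt_of_le hij with rfl | h
  · exact le_refl _
  rw [List.getD_eq_getElem _ _ hj, List.getD_eq_getElem _ _ (lt_trans h hj)]
  have := hl.1.rel_get_of_lt (a := ⟨i, lt_trans h hj⟩) (b := ⟨j, hj⟩) (by simpa using h)
  simpa using this

lemma L_pos (i : ℕ) (hi : i < l.length) : 0 < l.getD i 0 := by
  rw [List.getD_eq_getElem _ _ hi]
  exact hl.2 _ (List.getElem_mem hi)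

omit hl in
lemma L_head : l.headD 0 = l.getD 0 0 := by
  cases l with
  | nil => rfl
  | cons a t => rfl

lemma L_le_head (i : ℕ) (hi : i < l.length) : l.getD i 0 ≤ l.headD 0 := by
  rw [L_head]
  exact L_anti hl 0 i (Nat.zero_le _) hi

lemma hook0 (i : ℕ) (hi : i < l.length) : hook l i 0 = beta l i := by
  unfold hook beta
  have h1 : (Finset.range l.length).filter (fun k => i < k ∧ 0 < l.getD k 0)
      = Finset.Ioo i l.length := by
    ext k
    simp only [Finset.mem_filter, Finset.mem_range, Finset.mem_Ioo]
    constructor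
    · rintro ⟨h1, h2, _⟩; exact ⟨h2, h1⟩
    · rintro ⟨h1, h2⟩; exact ⟨h2, h1, L_pos hl k h2⟩
  rw [h1, Nat.card_Ioo]
  omega

lemma beta_lt_t (i : ℕ) (hi : i < l.length) : beta l i < l.length + l.headD 0 := by
  unfold beta
  have h1 := L_le_head hl i hi
  have h2 := L_pos hl 0 (by omega)
  have h3 : l.getD 0 0 ≤ l.headD 0 := by rw [L_head]
  omega

lemma beta_anti (i j : ℕ) (hij : i ≤ j) (hj : j < l.length) : beta l j ≤ beta l i := by
  unfold beta
  have := L_anti hl i j hij hj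
  omega

lemma beta_strict (i j : ℕ) (hij : i < j) (hj : j < l.length) : beta l j < beta l i := by
  unfold beta
  have := L_anti hl i j (le_of_lt hij) hj
  omega

lemma A_eq : firstColHooks l = (Finset.range l.length).image (beta l) := by
  unfold firstColHooks
  apply Finset.image_congr
  intro i hi
  simp only [Finset.coe_range, Set.mem_Iio] at hi
  exact hook0 hl i hi

lemma beta_injOn : Set.InjOn (beta l) (Finset.range l.length) := by
  intro i hi j hj hij
  simp only [Finset.coe_range, Set.mem_Iio] at hi hj
  by_contra hne'
  rcases Nat.lt_or_ge i j with h | h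
  · have := beta_strict hl i j h hj; omega
  · have hij' : j < i := by omega
    have := beta_strict hl j i hij' hi; omega

lemma A_sub : firstColHooks l ⊆ range (l.length + l.headD 0) := by
  rw [A_eq hl]
  intro x hx
  simp only [Finset.mem_image, Finset.mem_range] at hx ⊢
  obtain ⟨i, hi, rfl⟩ := hx
  exact beta_lt_t hl i hi

lemma mem_A_iff (x : ℕ) : x ∈ firstColHooks l ↔ ∃ i < l.length, beta l i = x := by
  rw [A_eq hl]
  simp [Finset.mem_image]

lemma hook_eq (i j : ℕ) (hi : i < l.length) (hj : j < l.getD i 0) :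
    hook l i j = beta l i - gam l i j ∧ gam l i j < beta l i := by
  unfold hook beta gam
  have hde : ((Finset.range l.length).filter (fun k => i < k ∧ j < l.getD k 0)).card
      + ((Finset.range l.length).filter fun k => i < k ∧ l.getD k 0 ≤ j).card
      = l.length - i - 1 := by
    have h1 : ((Finset.range l.length).filter (fun k => i < k ∧ l.getD k 0 ≤ j))
        = ((Finset.range l.length).filter (fun k => i < k ∧ ¬ (j < l.getD k 0))) :=
      Finset.filter_congr (fun x _ => by omega)
    have h2 : ((Finset.range l.length).filter (fun k => i < k ∧ j < l.getD k 0)).card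
        + ((Finset.range l.length).filter (fun k => i < k ∧ ¬ (j < l.getD k 0))).card
        = ((Finset.range l.length).filter (fun k => i < k)).card := by
      rw [← Finset.filter_filter, ← Finset.filter_filter]
      exact Finset.card_filter_add_card_filter_not _
    have h3 : (Finset.range l.length).filter (fun k => i < k) = Finset.Ioo i l.length := by
      ext k; simp only [Finset.mem_filter, Finset.mem_range, Finset.mem_Ioo]; tauto
    rw [h1, h2, h3, Nat.card_Ioo]
  constructor
  · omega
  · omega

lemma gam_ne_beta (i j k : ℕ) (hi : i < l.length) (hj : j < l.getD i 0) (hk : k < l.length) :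
    gam l i j ≠ beta l k := by
  rcases le_or_gt k i with hki | hik
  · have h1 := (hook_eq hl i j hi hj).2
    have h2 := beta_anti hl k i hki hi
    omega
  · rcases le_or_gt (l.getD k 0) j with hLk | hLk
    · -- e ≥ r - k, gam > beta k
      have hsub : Finset.Ico k l.length
          ⊆ (Finset.range l.length).filter fun k' => i < k' ∧ l.getD k' 0 ≤ j := by
        intro x hx
        simp only [Finset.mem_Ico] at hx
        simp only [Finset.mem_filter, Finset.mem_range]
        refine ⟨hx.2, by omega, ?_⟩
        exact le_trans (L_anti hl k x hx.1 hx.2) hLk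
      have hcard := Finset.card_le_card hsub
      rw [Nat.card_Ico] at hcard
      unfold gam beta
      omega
    · -- e ≤ r - k - 1, gam < beta k
      have hsub : ((Finset.range l.length).filter fun k' => i < k' ∧ l.getD k' 0 ≤ j)
          ⊆ Finset.Ioo k l.length := by
        intro x hx
        simp only [Finset.mem_filter, Finset.mem_range] at hx
        simp only [Finset.mem_Ioo]
        refine ⟨?_, hx.1⟩
        by_contra hc
        have hxk : x ≤ k := by omega
        have := L_anti hl x k hxk hk
        omega
      have hcard := Finset.card_le_card hsub
      rw [Nat.card_Ioo] at hcard
      unfold gam beta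
      omega

omit hl in
lemma gam_strictMonoOn (i : ℕ) (j j' : ℕ) (hjj : j < j') :
    gam l i j < gam l i j' := by
  unfold gam
  have hsub : ((Finset.range l.length).filter fun k => i < k ∧ l.getD k 0 ≤ j)
      ⊆ ((Finset.range l.length).filter fun k => i < k ∧ l.getD k 0 ≤ j') := by
    intro x hx
    simp only [Finset.mem_filter, Finset.mem_range] at hx ⊢
    exact ⟨hx.1, hx.2.1, by omega⟩
  have := Finset.card_le_card hsub
  omega

omit hl in
lemma gam_injOn (i : ℕ) : Set.InjOn (gam l i) (Finset.range (l.getD i 0)) := by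
  intro a _ b _ hab
  by_contra hne'
  rcases Nat.lt_or_ge a b with h | h
  · have := gam_strictMonoOn (l := l) i a b h; omega
  · have h' : b < a := by omega
    have := gam_strictMonoOn (l := l) i b a h'; omega

lemma rowSet (i : ℕ) (hi : i < l.length) :
    (Finset.range (l.getD i 0)).image (gam l i)
      = ((range (l.length + l.headD 0) \ firstColHooks l).filter (· < beta l i)) := by
  apply Finset.eq_of_subset_of_card_le
  · intro x hx
    simp only [Finset.mem_image, Finset.mem_range] at hx
    obtain ⟨j, hj, rfl⟩ := hx
    have hlt := (hook_eq hl i j hi hj).2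
    simp only [Finset.mem_filter, Finset.mem_sdiff, Finset.mem_range]
    refine ⟨⟨?_, ?_⟩, hlt⟩
    · have := beta_lt_t hl i hi; omega
    · rw [mem_A_iff hl]
      rintro ⟨k, hk, hbk⟩
      exact gam_ne_beta hl i j k hi hj hk hbk.symm
  · -- card of RHS ≤ card of LHS = l.getD i 0
    have hLHS : ((Finset.range (l.getD i 0)).image (gam l i)).card = l.getD i 0 := by
      rw [Finset.card_image_of_injOn (gam_injOn i), Finset.card_range]
    rw [hLHS]
    -- RHS = range (beta l i) \ A
    have hstep1 : ((range (l.length + l.headD 0) \ firstColHooks l).filter (· < beta l i))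
        = range (beta l i) \ firstColHooks l := by
      ext x
      simp only [Finset.mem_filter, Finset.mem_sdiff, Finset.mem_range]
      have := beta_lt_t hl i hi
      constructor
      · rintro ⟨⟨_, h2⟩, h3⟩; exact ⟨h3, h2⟩
      · rintro ⟨h1, h2⟩; exact ⟨⟨by omega, h2⟩, h1⟩
    have hstep2 : (firstColHooks l).filter (· < beta l i)
        = (Finset.Ioo i l.length).image (beta l) := by
      ext x
      simp only [Finset.mem_filter, Finset.mem_image, Finset.mem_Ioo]
      rw [mem_A_iff hl]
      constructor
      · rintro ⟨⟨k, hk, rfl⟩, hlt⟩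
        refine ⟨k, ⟨?_, hk⟩, rfl⟩
        by_contra hc
        have hki : k ≤ i := by omega
        have := beta_anti hl k i hki hi
        omega
      · rintro ⟨k, ⟨hik, hk⟩, rfl⟩
        exact ⟨⟨k, hk, rfl⟩, beta_strict hl i k hik hk⟩
    have hstep3 : range (beta l i) \ firstColHooks l
        = range (beta l i) \ ((firstColHooks l).filter (· < beta l i)) := by
      ext x
      simp only [Finset.mem_sdiff, Finset.mem_range, Finset.mem_filter]
      tauto
    have hsub : ((firstColHooks l).filter (· < beta l i)) ⊆ range (beta l i) := by
      intro x hx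
      simp only [Finset.mem_filter] at hx
      simp only [Finset.mem_range]
      exact hx.2
    have hcard2 : ((firstColHooks l).filter (· < beta l i)).card = l.length - i - 1 := by
      rw [hstep2, Finset.card_image_of_injOn, Nat.card_Ioo]
      apply Set.InjOn.mono _ (beta_injOn hl)
      intro x hx
      simp only [Finset.coe_Ioo, Set.mem_Ioo] at hx
      simp only [Finset.coe_range, Set.mem_Iio]
      exact hx.2
    rw [hstep1, hstep3, Finset.card_sdiff_of_subset hsub, Finset.card_range, hcard2]
    unfold beta
    omega

lemma hook_row (i : ℕ) (hi : i < l.length) :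
    (↑((List.range (l.getD i 0)).map (hook l i)) : Multiset ℕ)
      = Multiset.map (fun a => beta l i - a)
          ((range (l.length + l.headD 0) \ firstColHooks l).filter (· < beta l i)).val := by
  rw [← rowSet hl i hi, Finset.image_val_of_injOn (gam_injOn i), Multiset.map_map]
  show Multiset.map (hook l i) ↑(List.range (l.getD i 0)) = _
  apply Multiset.map_congr
  · rfl
  · intro j hj
    have hj' : j < l.getD i 0 := by
      rw [show ((Finset.range (l.getD i 0)).val : Multiset ℕ) = Multiset.range (l.getD i 0) from rfl] at hj
      simpa using hj
    exact (hook_eq hl i j hi hj').1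

omit hl in
lemma filter_bind_aux {α β : Type} (s : Multiset α) (f : α → Multiset β)
    (p : β → Prop) [DecidablePred p] :
    Multiset.filter p (s.bind f) = s.bind fun a => Multiset.filter p (f a) := by
  induction s using Multiset.induction with
  | empty => simp
  | cons a s ih => simp [ih]

lemma hookMultiset_eq : hookMultiset l
    = posDiffs (firstColHooks l) (range (l.length + l.headD 0) \ firstColHooks l) := by
  classical
  set Ac := range (l.length + l.headD 0) \ firstColHooks l with hAc
  -- LHS as a bind over Multiset.range
  have lhs : hookMultiset l = (Multiset.range l.length).bind
      (fun i => ↑((List.range (l.getD i 0)).map (hook l i))) := by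
    unfold hookMultiset
    rw [show (Multiset.range l.length) = ((List.range l.length : List ℕ) : Multiset ℕ) from rfl]
    rw [Multiset.coe_bind]
  -- RHS as a bind
  have rhs : posDiffs (firstColHooks l) Ac
      = (Multiset.range l.length).bind
        (fun i => Multiset.map (fun a => beta l i - a) ((Ac.filter (· < beta l i)).val)) := by
    unfold posDiffs
    rw [Finset.filter_val, Finset.product_val]
    have hAval : (firstColHooks l).val = Multiset.map (beta l) (Multiset.range l.length) := by
      rw [A_eq hl, Finset.image_val_of_injOn (beta_injOn hl)]
      rfl
    rw [show (firstColHooks l).val ×ˢ Ac.val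
        = (firstColHooks l).val.bind (fun a => Ac.val.map (Prod.mk a)) from rfl]
    rw [hAval, Multiset.bind_map]
    rw [filter_bind_aux, Multiset.map_bind]
    apply Multiset.bind_congr
    intro i hi
    rw [Multiset.filter_map, Multiset.map_map, Finset.filter_val]
    apply Multiset.map_congr
    · apply Multiset.filter_congr
      intro x _
      simp [Function.comp]
    · intro x _
      rfl
  rw [lhs, rhs]
  apply Multiset.bind_congr
  intro i hi
  have hi' : i < l.length := by simpa using hi
  exact hook_row hl i hi'

end Part

end Stmt18Beta


/-- The missing-hook multiset of `E∞(λ)` is determined by `H(λ)`: clustered partitions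
(with the same `t`) have clustered enveloping ∞-partitions. -/
theorem stmt18 (l m : List ℕ) (hl : IsPartition l) (hm : IsPartition m)
    (hnel : l ≠ []) (hnem : m ≠ [])
    (ht : l.length + l.headD 0 = m.length + m.headD 0)
    (hH : hookMultiset l = hookMultiset m) :
    envMissing l = envMissing m := by
  classical
  have ht0 : 0 < l.length + l.headD 0 := by
    have : 0 < l.length := List.length_pos_iff.mpr hnel
    omega
  have h1 := Stmt18Beta.hookMultiset_eq hl
  have h2 := Stmt18Beta.hookMultiset_eq hm
  have hsl := Stmt18Beta.A_sub hl
  have hsm := Stmt18Beta.A_sub hm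
  rw [← ht] at h2 hsm
  have hcnt : ∀ w,
      Stmt18Aux.cnt (firstColHooks l)
        (Finset.range (l.length + l.headD 0) \ firstColHooks l) w
      = Stmt18Aux.cnt (firstColHooks m)
        (Finset.range (l.length + l.headD 0) \ firstColHooks m) w := by
    intro w
    rw [← Stmt18Aux.count_posDiffs, ← Stmt18Aux.count_posDiffs, ← h1, ← h2, hH]
  have key := Stmt18Aux.envCore (l.length + l.headD 0) ht0
    (firstColHooks l) (firstColHooks m) hsl hsm hcnt
  have el : envMissing l
      = posDiffs (Stmt18Aux.Ch (l.length + l.headD 0) (firstColHooks l))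
          (Stmt18Aux.Ch (l.length + l.headD 0) (firstColHooks l)) := rfl
  have em : envMissing m
      = posDiffs (Stmt18Aux.Ch (l.length + l.headD 0) (firstColHooks m))
          (Stmt18Aux.Ch (l.length + l.headD 0) (firstColHooks m)) := by
    unfold envMissing envChar Stmt18Aux.Ch
    rw [← ht]
  rw [el, em, key]
end
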